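/- For α > 2, θ ≥ 0, r > 0: ∫_r^∞ (1 − 1/(1 + θ r^α v^{−α})) v dv = (r²/2)·𝔷(θ,α), where 𝔷(θ,α) = (2θ/(α−2))·₂F₁(1, 1−2/α; 2−2/α; −θ). -/

import Mathlib

open Real MeasureTheory

noncomputable def hyp2F1 (a b c z : ℝ) : ℝ :=
  (Real.Gamma c / (Real.Gamma b * Real.Gamma (c - b))) *
    ∫ t in Set.Ioo (0 : ℝ) 1, t ^ (b - 1) * (1 - t) ^ (c - b - 1) * (1 - z * t) ^ (-a)

/-- The interference functional `𝔷(θ,α) = (2θ/(α−2))·₂F₁(1, 1−2/α; 2−2/α; −θ)`. -/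
noncomputable def zFun (θ α : ℝ) : ℝ :=
  2 * θ / (α - 2) * hyp2F1 1 (1 - 2 / α) (2 - 2 / α) (-θ)

/-- For `α > 2`, `θ ≥ 0`, `r > 0`:
`∫_r^∞ (1 − 1/(1 + θ r^α v^{−α})) v dv = (r²/2)·𝔷(θ,α)`. -/
theorem interference_integral_exclusion (α θ r : ℝ) (hα : 2 < α) (hθ : 0 ≤ θ)
    (hr : 0 < r) :
    (∫ v in Set.Ioi r, (1 - 1 / (1 + θ * r ^ α * v ^ (-α))) * v) =
      r ^ 2 / 2 * zFun θ α := by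
  have hα0 : (0:ℝ) < α := by linarith
  have hαne : α ≠ 0 := ne_of_gt hα0
  have hα2 : α - 2 ≠ 0 := by linarith
  -- the image of (0,1) under t ↦ r * t^(-1/α) is (r, ∞)
  have himg : (fun t : ℝ => r * t ^ (-(1/α))) '' Set.Ioo 0 1 = Set.Ioi r := by
    ext v
    simp only [Set.mem_image, Set.mem_Ioo, Set.mem_Ioi]
    constructor
    · rintro ⟨t, ⟨ht0, ht1⟩, rfl⟩
      have h1 : 1 < t ^ (-(1/α)) := by
        rw [Real.one_lt_rpow_iff_of_pos ht0]
        have h1α : 0 < 1/α := by positivity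
        exact Or.inr ⟨ht1, by linarith⟩
      nlinarith
    · intro hv
      have hv0 : 0 < v := lt_trans hr hv
      have hrv : 0 < r / v := div_pos hr hv0
      refine ⟨(r/v) ^ α, ⟨Real.rpow_pos_of_pos hrv α,
        Real.rpow_lt_one hrv.le ((div_lt_one hv0).2 hv) hα0⟩, ?_⟩
      rw [← Real.rpow_mul hrv.le, show α * -(1/α) = -1 by field_simp, Real.rpow_neg_one]
      field_simp
  have hderiv : ∀ t ∈ Set.Ioo (0:ℝ) 1,
      HasDerivWithinAt (fun t : ℝ => r * t ^ (-(1/α)))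
        (r * (-(1/α) * t ^ (-(1/α) - 1))) (Set.Ioo 0 1) t := by
    intro t ht
    exact ((Real.hasDerivAt_rpow_const (Or.inl (ne_of_gt ht.1))).const_mul r).hasDerivWithinAt
  have hinj : Set.InjOn (fun t : ℝ => r * t ^ (-(1/α))) (Set.Ioo 0 1) := by
    intro a ha b hb hab
    simp only at hab
    have h1 : a ^ (-(1/α)) = b ^ (-(1/α)) := mul_left_cancel₀ (ne_of_gt hr) hab
    have hne : -(1/α) ≠ 0 := by simp [hαne]
    have h2 : (a ^ (-(1/α))) ^ (-(1/α))⁻¹ = (b ^ (-(1/α))) ^ (-(1/α))⁻¹ := by rw [h1]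
    rwa [← Real.rpow_mul ha.1.le, ← Real.rpow_mul hb.1.le, mul_inv_cancel₀ hne,
      Real.rpow_one, Real.rpow_one] at h2
  have key := MeasureTheory.integral_image_eq_integral_abs_deriv_smul measurableSet_Ioo
      hderiv hinj (fun v => (1 - 1 / (1 + θ * r ^ α * v ^ (-α))) * v)
  rw [himg] at key
  rw [key]
  -- RHS evaluates to (r²θ/α) ∫ t^(-2/α)/(1+θt)
  have hb : (0:ℝ) < 1 - 2/α := by
    have : 2/α < 1 := (div_lt_one hα0).2 (by linarith)
    linarith
  have hR : r ^ 2 / 2 * zFun θ α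
      = (r^2 * θ / α) * ∫ t in Set.Ioo (0:ℝ) 1, t ^ (-(2/α)) * (1 + θ*t)⁻¹ := by
    rw [zFun, hyp2F1]
    have hGamma : Real.Gamma (2 - 2/α) = (1 - 2/α) * Real.Gamma (1 - 2/α) := by
      rw [show (2 - 2/α : ℝ) = (1 - 2/α) + 1 by ring, Real.Gamma_add_one (ne_of_gt hb)]
    have hcb : (2 - 2/α) - (1 - 2/α) = (1:ℝ) := by ring
    rw [hcb, Real.Gamma_one, hGamma]
    have hint : (∫ t in Set.Ioo (0:ℝ) 1,
        t ^ ((1 - 2/α) - 1) * (1-t) ^ ((1:ℝ) - 1) * (1 - (-θ)*t) ^ (-(1:ℝ)))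
        = ∫ t in Set.Ioo (0:ℝ) 1, t ^ (-(2/α)) * (1 + θ*t)⁻¹ := by
      refine MeasureTheory.setIntegral_congr_fun measurableSet_Ioo fun t ht => ?_
      rw [show ((1:ℝ) - 2/α) - 1 = -(2/α) by ring, show ((1:ℝ) - 1) = 0 by ring,
        Real.rpow_zero, show (1 - (-θ)*t) = 1 + θ*t by ring, Real.rpow_neg_one]
      ring
    rw [hint]
    have hGne : Real.Gamma (1 - 2/α) ≠ 0 := ne_of_gt (Real.Gamma_pos_of_pos hb)
    set G := Real.Gamma (1 - 2/α) with hG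
    set I := ∫ t in Set.Ioo (0:ℝ) 1, t ^ (-(2/α)) * (1 + θ*t)⁻¹ with hI
    field_simp
  rw [hR, ← integral_const_mul]
  refine MeasureTheory.setIntegral_congr_fun measurableSet_Ioo fun t ht => ?_
  obtain ⟨ht0, ht1⟩ := ht
  have hden : (0:ℝ) < 1 + θ * t := by nlinarith
  have hx : (0:ℝ) < t ^ (-(1/α)) := Real.rpow_pos_of_pos ht0 _
  have hy : (0:ℝ) < t ^ (-(1/α) - 1) := Real.rpow_pos_of_pos ht0 _
  simp only [smul_eq_mul]
  have h2 : (r * t ^ (-(1/α))) ^ (-α) = r ^ (-α) * t := by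
    rw [Real.mul_rpow hr.le hx.le, ← Real.rpow_mul ht0.le,
      show -(1/α) * -α = 1 by field_simp, Real.rpow_one]
  have h3 : r ^ α * r ^ (-α) = 1 := by
    rw [← Real.rpow_add hr]; simp
  have habs : |r * (-(1/α) * t ^ (-(1/α) - 1))| = r * (1/α) * t ^ (-(1/α) - 1) := by
    rw [abs_mul, abs_mul, abs_neg, abs_of_pos hr, abs_of_pos (by positivity : (0:ℝ) < 1/α),
      abs_of_pos hy]
    ring
  have hfrac : 1 - 1 / (1 + θ * r ^ α * (r * t ^ (-(1/α))) ^ (-α))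
      = θ * t / (1 + θ * t) := by
    rw [h2, show θ * r ^ α * (r ^ (-α) * t) = θ * t * (r ^ α * r ^ (-α)) by ring, h3]
    field_simp
    ring
  rw [habs, hfrac]
  have hT : t ^ (-(1/α) - 1) * t ^ (-(1/α)) * t = t ^ (-(2/α)) := by
    calc t ^ (-(1/α) - 1) * t ^ (-(1/α)) * t
        = t ^ ((-(1/α) - 1) + -(1/α) + 1) := by
          rw [Real.rpow_add ht0, Real.rpow_add ht0, Real.rpow_one]
      _ = t ^ (-(2/α)) := by rw [show (-(1/α) - 1) + -(1/α) + 1 = -(2/α) by ring]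
  rw [← hT]
  ring
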